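/- Let H be a connected locally semicomplete digraph that is not strong. Then the strong components of H can be ordered in a unique way D_1, D_2, …, D_p such that there is no arc from a vertex of D_j to a vertex of D_i whenever j > i, and every vertex of D_i dominates every vertex of D_{i+1} for i = 1, …, p−1. -/

import Mathlib

open Relation

section Aux
variable {V : Type} {A : V → V → Prop}

private lemma lemA (hloc_in : ∀ x y z : V, y ≠ z → A y x → A z x → (A y z ∨ A z y))
    {x v : V} (hxv : ReflTransGen A x v) :
    ∀ y, A y v → ReflTransGen A x y ∨ ReflTransGen A y x := by
  induction hxv with
  | refl => exact fun y hy => Or.inr (ReflTransGen.single hy)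
  | @tail w v' hxw hwv ih =>
    intro y hyv
    by_cases hwy : w = y
    · exact Or.inl (hwy ▸ hxw)
    · rcases hloc_in v' w y hwy hwv hyv with h | h
      · exact Or.inl (hxw.tail h)
      · exact ih y h

private lemma lemB (hloc_out : ∀ x y z : V, y ≠ z → A x y → A x z → (A y z ∨ A z y))
    {v x : V} (hvx : ReflTransGen A v x) :
    ∀ y, A v y → ReflTransGen A x y ∨ ReflTransGen A y x := by
  induction hvx using Relation.ReflTransGen.head_induction_on with
  | refl => exact fun y hy => Or.inl (ReflTransGen.single hy)
  | @head a c hac hcx ih =>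
    intro y hay
    by_cases hcy : c = y
    · exact Or.inr (hcy ▸ hcx)
    · rcases hloc_out a c y hcy hac hay with h | h
      · exact ih y h
      · exact Or.inr (ReflTransGen.head h hcx)

private lemma rtotal (hloc_out : ∀ x y z : V, y ≠ z → A x y → A x z → (A y z ∨ A z y))
    (hloc_in : ∀ x y z : V, y ≠ z → A y x → A z x → (A y z ∨ A z y))
    (hconn : ∀ x y : V, Relation.ReflTransGen (fun u w => A u w ∨ A w u) x y)
    (x y : V) : ReflTransGen A x y ∨ ReflTransGen A y x := by
  induction hconn x y with
  | refl => exact Or.inl ReflTransGen.refl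
  | @tail w y' hxw hwy ih =>
    rcases ih with ih | ih
    · rcases hwy with h | h
      · exact Or.inl (ih.tail h)
      · exact lemA hloc_in ih y' h
    · rcases hwy with h | h
      · exact lemB hloc_out ih y' h
      · exact Or.inr (ReflTransGen.head h ih)

private lemma lemC (hloc_in : ∀ x y z : V, y ≠ z → A y x → A z x → (A y z ∨ A z y))
    {a b : V} (hab : A a b) (hna : ¬ ReflTransGen A b a) :
    ∀ b', ReflTransGen A b' b → ReflTransGen A b b' → A a b' := by
  intro b' hb'b
  induction hb'b using Relation.ReflTransGen.head_induction_on with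
  | refl => exact fun _ => hab
  | @head c w hcw hwb ih =>
    intro hbc
    have hbw : ReflTransGen A b w := hbc.tail hcw
    have haw : A a w := ih hbw
    have hca : c ≠ a := fun h => hna (h ▸ hbc)
    rcases hloc_in w c a hca hcw haw with h | h
    · exact absurd (hbc.tail h) hna
    · exact h

private lemma lemD (hloc_out : ∀ x y z : V, y ≠ z → A x y → A x z → (A y z ∨ A z y))
    {a b : V} (hab : A a b) (hna : ¬ ReflTransGen A b a) :
    ∀ a', ReflTransGen A a a' → ReflTransGen A a' a → A a' b := by
  intro a' haa'
  induction haa' with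
  | refl => exact fun _ => hab
  | @tail c a' hac harc ih =>
    intro ha'a
    have hcb : A c b := ih (ReflTransGen.head harc ha'a)
    have hne : a' ≠ b := fun h => hna (h ▸ ha'a)
    rcases hloc_out c a' b hne harc hcb with h | h
    · exact h
    · exact absurd (ha'a.head h) hna

private lemma lemE (hloc_out : ∀ x y z : V, y ≠ z → A x y → A x z → (A y z ∨ A z y))
    (hloc_in : ∀ x y z : V, y ≠ z → A y x → A z x → (A y z ∨ A z y))
    {a b a' b' : V} (hab : A a b) (hna : ¬ ReflTransGen A b a)
    (h1 : ReflTransGen A a a') (h2 : ReflTransGen A a' a)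
    (h3 : ReflTransGen A b b') (h4 : ReflTransGen A b' b) : A a' b' := by
  have ha'b : A a' b := lemD hloc_out hab hna a' h1 h2
  have hna' : ¬ ReflTransGen A b a' := fun h => hna (h.trans h2)
  exact lemC hloc_in ha'b hna' b' h4 h3

private lemma listEq {α : Type*} (lt : α → α → Prop) :
    ∀ (l1 l2 : List α), l1.Pairwise lt → l2.Pairwise lt →
    (∀ a ∈ l1, ¬ lt a a) →
    (∀ a ∈ l1, ∀ b ∈ l1, lt a b → lt b a → False) →
    (∀ a, a ∈ l1 ↔ a ∈ l2) → l1 = l2 := by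
  intro l1
  induction l1 with
  | nil =>
    intro l2 _ _ _ _ hm
    cases l2 with
    | nil => rfl
    | cons b t => exact absurd ((hm b).mpr (List.mem_cons_self (a := b) (l := t))) (List.not_mem_nil (a := b))
  | cons a t ih =>
    intro l2 h1 h2 irr asym hm
    cases l2 with
    | nil => exact absurd ((hm a).mp (List.mem_cons_self (a := a) (l := t))) (List.not_mem_nil (a := a))
    | cons b t2 =>
      have hab : a = b := by
        by_contra hne
        have ha2 : a ∈ t2 := by
          rcases List.mem_cons.mp ((hm a).mp (List.mem_cons_self (a := a) (l := t))) with h | h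
          · exact absurd h hne
          · exact h
        have hb1 : b ∈ t := by
          rcases List.mem_cons.mp ((hm b).mpr (List.mem_cons_self (a := b) (l := t2))) with h | h
          · exact absurd h.symm hne
          · exact h
        exact asym a (List.mem_cons_self (a := a) (l := t)) b (List.mem_cons_of_mem a hb1)
          (List.rel_of_pairwise_cons h1 hb1) (List.rel_of_pairwise_cons h2 ha2)
      subst hab
      have htt : t = t2 := by
        apply ih t2 h1.of_cons h2.of_cons
          (fun x hx => irr x (List.mem_cons_of_mem a hx))
          (fun x hx y hy => asym x (List.mem_cons_of_mem a hx) y (List.mem_cons_of_mem a hy))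
        intro x
        constructor
        · intro hx
          rcases List.mem_cons.mp ((hm x).mp (List.mem_cons_of_mem a hx)) with h | h
          · exact absurd (h ▸ List.rel_of_pairwise_cons h1 hx)
              (irr a (List.mem_cons_self (a := a) (l := t)))
          · exact h
        · intro hx
          rcases List.mem_cons.mp ((hm x).mpr (List.mem_cons_of_mem a hx)) with h | h
          · exact absurd (h ▸ List.rel_of_pairwise_cons h2 hx)
              (irr a (List.mem_cons_self (a := a) (l := t)))
          · exact h
      rw [htt]
end Aux
/-- The strong components of a connected, non-strong locally semicomplete
digraph can be ordered in a unique way `D_1, …, D_p` with no arc from `D_j` to `D_i` for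
`j > i`, and `D_i` dominating `D_{i+1}` for each `i < p`. -/
theorem stmt_2 {V : Type} [Fintype V] (A : V → V → Prop)
    (hirr : ∀ v, ¬ A v v)
    (hloc_out : ∀ x y z : V, y ≠ z → A x y → A x z → (A y z ∨ A z y))
    (hloc_in : ∀ x y z : V, y ≠ z → A y x → A z x → (A y z ∨ A z y))
    (hconn : ∀ x y : V, Relation.ReflTransGen (fun u w => A u w ∨ A w u) x y)
    (hnotstrong : ¬ ∀ x y : V, Relation.ReflTransGen A x y) :
    ∃! L : List (Set V),
      L.Nodup ∧
      (∀ S : Set V,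
        ((∃ x, S = {y | Relation.ReflTransGen A x y ∧ Relation.ReflTransGen A y x}) ↔ S ∈ L)) ∧
      (∀ i j : Fin L.length, i < j → ∀ a ∈ L.get j, ∀ b ∈ L.get i, ¬ A a b) ∧
      (∀ i : ℕ, (h : i + 1 < L.length) →
        ∀ a ∈ L.get ⟨i, Nat.lt_of_succ_lt h⟩, ∀ b ∈ L.get ⟨i + 1, h⟩, A a b) := by
  classical
  set C : V → Set V := fun x => {y | ReflTransGen A x y ∧ ReflTransGen A y x} with hC
  have hCdef : ∀ x, C x = {y | ReflTransGen A x y ∧ ReflTransGen A y x} := fun _ => rfl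
  have memCiff : ∀ x y, y ∈ C x ↔ (ReflTransGen A x y ∧ ReflTransGen A y x) := fun _ _ => Iff.rfl
  have Cself : ∀ x, x ∈ C x := fun x => ⟨ReflTransGen.refl, ReflTransGen.refl⟩
  have Ceq : ∀ {x y}, ReflTransGen A x y → ReflTransGen A y x → C x = C y := by
    intro x y h1 h2; ext z
    exact ⟨fun hz => ⟨h2.trans hz.1, hz.2.trans h1⟩, fun hz => ⟨h1.trans hz.1, hz.2.trans h2⟩⟩
  have CeqOfMem : ∀ {x : V} {S : Set V}, (∃ c, S = C c) → x ∈ S → S = C x := by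
    rintro x S ⟨c, rfl⟩ hx; exact Ceq hx.1 hx.2
  have total := rtotal hloc_out hloc_in hconn
  set k : Set V → ℕ := fun S => Set.ncard {v : V | ∀ x ∈ S, ReflTransGen A v x} with hk
  have kC : ∀ x, k (C x) = Set.ncard {v : V | ReflTransGen A v x} := by
    intro x
    have he : {v : V | ∀ z ∈ C x, ReflTransGen A v z} = {v : V | ReflTransGen A v x} := by
      ext v; simp only [Set.mem_setOf_eq]
      exact ⟨fun h => h x (Cself x), fun h z hz => h.trans hz.1⟩
    simp only [hk]; rw [he]
  have klt : ∀ {x y}, ReflTransGen A x y → ¬ ReflTransGen A y x → k (C x) < k (C y) := by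
    intro x y hxy hnyx
    rw [kC x, kC y]
    apply Set.ncard_lt_ncard _ (Set.toFinite _)
    rw [ssubset_iff_subset_not_subset]
    constructor
    · intro v hv; exact hv.trans hxy
    · intro hsub; exact hnyx (hsub (Set.mem_setOf_eq ▸ ReflTransGen.refl))
  set comps : Finset (Set V) := Finset.univ.image C with hcomps
  set leB : Set V → Set V → Bool := fun S T => decide (k S ≤ k T) with hleB
  set LL : List (Set V) := comps.toList.mergeSort leB with hLL
  have perm : LL.Perm comps.toList := List.mergeSort_perm _ _
  have memL : ∀ S, S ∈ LL ↔ ∃ x, S = C x := by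
    intro S
    rw [perm.mem_iff, Finset.mem_toList, hcomps]
    simp only [Finset.mem_image, Finset.mem_univ, true_and]
    exact ⟨fun ⟨x, hx⟩ => ⟨x, hx.symm⟩, fun ⟨x, hx⟩ => ⟨x, hx.symm⟩⟩
  have nodupL : LL.Nodup := perm.nodup_iff.mpr (Finset.nodup_toList comps)
  have sortedK : LL.Pairwise (fun S T => k S ≤ k T) := by
    have h := List.pairwise_mergeSort (le := leB)
      (fun a b c h1 h2 => by
        simp only [hleB, decide_eq_true_eq] at h1 h2 ⊢; omega)
      (fun a b => by
        simp only [hleB, Bool.or_eq_true, decide_eq_true_eq]; omega)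
      comps.toList
    rw [← hLL] at h
    exact h.imp (fun hab => by simpa only [hleB, decide_eq_true_eq] using hab)
  set lt : Set V → Set V → Prop :=
    fun S T => ∃ x ∈ S, ∃ y ∈ T, ReflTransGen A x y ∧ ¬ ReflTransGen A y x with hlt
  have ltIrrC : ∀ c, ¬ lt (C c) (C c) := by
    rintro c ⟨x, hx, y, hy, hxy, hn⟩; exact hn (hy.2.trans hx.1)
  have ltAsymC : ∀ c d, lt (C c) (C d) → lt (C d) (C c) → False := by
    rintro c d ⟨x, hx, y, hy, hxy, hn⟩ ⟨x', hx', y', hy', hx'y', hn'⟩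
    exact hn (((hy.2.trans hx'.1).trans hx'y').trans (hy'.2.trans hx.1))
  have ltTransC : ∀ {S U : Set V} (d : V), lt S (C d) → lt (C d) U → lt S U := by
    rintro S U d ⟨x, hx, y, hy, hxy, hn⟩ ⟨y', hy', z, hz, hy'z, hn'⟩
    refine ⟨x, hx, z, hz, (hxy.trans (hy.2.trans hy'.1)).trans hy'z, fun hzx => ?_⟩
    exact hn' ((hzx.trans hxy).trans (hy.2.trans hy'.1))
  have kltltC : ∀ c d, lt (C c) (C d) → k (C c) < k (C d) := by
    rintro c d ⟨x, hx, y, hy, hxy, hn⟩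
    rw [CeqOfMem ⟨c, rfl⟩ hx, CeqOfMem ⟨d, rfl⟩ hy]
    exact klt hxy hn
  have pairwiseLtL : LL.Pairwise lt := by
    rw [List.pairwise_iff_get]
    intro i j hij
    obtain ⟨c, hc⟩ := (memL _).mp (List.get_mem LL ⟨i.1, i.2⟩)
    obtain ⟨d, hd⟩ := (memL _).mp (List.get_mem LL ⟨j.1, j.2⟩)
    have hne : C c ≠ C d := by
      rw [← hc, ← hd]
      intro he
      exact hij.ne (nodupL.get_inj_iff.mp he)
    rw [hc, hd]
    rcases total c d with h | h
    · by_cases h2 : ReflTransGen A d c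
      · exact absurd (Ceq h h2) hne
      · exact ⟨c, Cself c, d, Cself d, h, h2⟩
    · by_cases h2 : ReflTransGen A c d
      · exact absurd (Ceq h2 h) hne
      · exfalso
        have hk1 : k (C d) < k (C c) := kltltC d c ⟨d, Cself d, c, Cself c, h, h2⟩
        have hk2 : k (C c) ≤ k (C d) := by
          have := List.pairwise_iff_get.mp sortedK i j hij
          rwa [hc, hd] at this
        omega
  have idxltL : ∀ i j : Fin LL.length, lt (LL.get i) (LL.get j) → i < j := by
    intro i j hltij
    rcases lt_trichotomy i j with h | h | h
    · exact h
    · exfalso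
      rw [h] at hltij
      obtain ⟨c, hc⟩ := (memL _).mp (List.get_mem LL ⟨j.1, j.2⟩)
      rw [hc] at hltij
      exact ltIrrC c hltij
    · exfalso
      have h2 := List.pairwise_iff_get.mp pairwiseLtL j i h
      obtain ⟨c, hc⟩ := (memL _).mp (List.get_mem LL ⟨i.1, i.2⟩)
      obtain ⟨d, hd⟩ := (memL _).mp (List.get_mem LL ⟨j.1, j.2⟩)
      rw [hc] at hltij h2
      rw [hd] at hltij h2
      exact ltAsymC d c h2 hltij
  refine ⟨LL, ⟨nodupL, ?_, ?_, ?_⟩, ?_⟩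
  · -- membership
    exact fun S => (memL S).symm
  · -- no backward arcs
    intro i j hij a haj b hbi hA
    have hltij := List.pairwise_iff_get.mp pairwiseLtL i j hij
    obtain ⟨x, hx, y, hy, hxy, hnyx⟩ := hltij
    have hSi : LL.get i = C x := CeqOfMem ((memL _).mp (List.get_mem LL ⟨i.1, i.2⟩)) hx
    have hSj : LL.get j = C y := CeqOfMem ((memL _).mp (List.get_mem LL ⟨j.1, j.2⟩)) hy
    have hya : ReflTransGen A y a := (hSj ▸ haj : a ∈ C y).1
    have hbx : ReflTransGen A b x := (hSi ▸ hbi : b ∈ C x).2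
    exact hnyx (((hya.tail hA).trans hbx))
  · -- consecutive domination
    intro i h a ha b hb
    have hSmemi : LL.get ⟨i, Nat.lt_of_succ_lt h⟩ ∈ LL := List.get_mem LL ⟨i, Nat.lt_of_succ_lt h⟩
    have hSmemi1 : LL.get ⟨i + 1, h⟩ ∈ LL := List.get_mem LL ⟨(i + 1), h⟩
    have hSclass := (memL _).mp hSmemi
    have hTclass := (memL _).mp hSmemi1
    have hSa : LL.get ⟨i, Nat.lt_of_succ_lt h⟩ = C a := CeqOfMem hSclass ha
    have hTb : LL.get ⟨i + 1, h⟩ = C b := CeqOfMem hTclass hb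
    have hST : LL.get ⟨i, Nat.lt_of_succ_lt h⟩ ≠ LL.get ⟨i + 1, h⟩ := by
      intro he
      have := nodupL.get_inj_iff.mp he
      simp only [Fin.mk.injEq] at this
      omega
    have hland := List.pairwise_iff_get.mp pairwiseLtL ⟨i, Nat.lt_of_succ_lt h⟩ ⟨i + 1, h⟩
      (by simp [Fin.lt_def])
    obtain ⟨x, hx, y, hy, hxy, hnyx⟩ := hland
    have hab : ReflTransGen A a b :=
      ((hSa ▸ hx : x ∈ C a).1.trans hxy).trans (hTb ▸ hy : y ∈ C b).2
    have key : ∀ c, ReflTransGen A c b → c ∈ LL.get ⟨i, Nat.lt_of_succ_lt h⟩ →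
        ∃ u w, u ∈ LL.get ⟨i, Nat.lt_of_succ_lt h⟩ ∧ w ∈ LL.get ⟨i + 1, h⟩ ∧ A u w := by
      intro c hcb
      induction hcb using Relation.ReflTransGen.head_induction_on with
      | refl =>
        intro hbS
        exact absurd ((CeqOfMem hSclass hbS).trans hTb.symm) hST
      | @head c d hcd hdb ih =>
        intro hcS
        by_cases hdS : d ∈ LL.get ⟨i, Nat.lt_of_succ_lt h⟩
        · exact ih hdS
        · by_cases hdT : C d = LL.get ⟨i + 1, h⟩
          · exact ⟨c, d, hcS, hdT ▸ Cself d, hcd⟩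
          · exfalso
            have hSc : LL.get ⟨i, Nat.lt_of_succ_lt h⟩ = C c := CeqOfMem hSclass hcS
            have hCdL : C d ∈ LL := (memL _).mpr ⟨d, rfl⟩
            obtain ⟨m, hm⟩ := List.mem_iff_get.mp hCdL
            have l1 : lt (LL.get ⟨i, Nat.lt_of_succ_lt h⟩) (LL.get m) := by
              rw [hm, hSc]
              exact ⟨c, Cself c, d, Cself d, ReflTransGen.single hcd, fun hdc =>
                hdS (by rw [hSc]; exact ⟨ReflTransGen.single hcd, hdc⟩)⟩
            have l2 : lt (LL.get m) (LL.get ⟨i + 1, h⟩) := by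
              rw [hm]
              refine ⟨d, Cself d, b, hb, hdb, fun hbd => ?_⟩
              exact hdT ((CeqOfMem ⟨b, rfl⟩ (⟨hbd, hdb⟩ : d ∈ C b)).symm.trans hTb.symm)
            have i1 := idxltL _ _ l1
            have i2 := idxltL _ _ l2
            rw [Fin.lt_def] at i1 i2
            simp only [] at i1 i2
            omega
    obtain ⟨u, w, hu, hw, huw⟩ := key a hab ha
    have hRua : ReflTransGen A u a := (hSa ▸ hu : u ∈ C a).2
    have hRau : ReflTransGen A a u := (hSa ▸ hu : u ∈ C a).1
    have hRwb : ReflTransGen A w b := (hTb ▸ hw : w ∈ C b).2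
    have hRbw : ReflTransGen A b w := (hTb ▸ hw : w ∈ C b).1
    have hnwu : ¬ ReflTransGen A w u := by
      intro hwu
      have hRuw : ReflTransGen A u w := (hRua.trans hab).trans hRbw
      exact hST ((CeqOfMem hSclass hu).trans ((Ceq hRuw hwu).trans (CeqOfMem hTclass hw).symm))
    exact lemE hloc_out hloc_in huw hnwu hRua hRau hRwb hRbw
  · -- uniqueness
    rintro L' ⟨nodup', hmem', _, hdom'⟩
    have memL' : ∀ S, S ∈ L' ↔ ∃ x, S = C x := fun S => (hmem' S).symm
    have consec : ∀ (n : ℕ) (hn : n + 1 < L'.length),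
        lt (L'.get ⟨n, Nat.lt_of_succ_lt hn⟩) (L'.get ⟨n + 1, hn⟩) := by
      intro n hn
      obtain ⟨x0, hx0⟩ := (memL' _).mp (List.get_mem L' ⟨n, (Nat.lt_of_succ_lt hn)⟩)
      obtain ⟨y0, hy0⟩ := (memL' _).mp (List.get_mem L' ⟨(n + 1), hn⟩)
      have hxmem : x0 ∈ L'.get ⟨n, Nat.lt_of_succ_lt hn⟩ := hx0 ▸ Cself x0
      have hymem : y0 ∈ L'.get ⟨n + 1, hn⟩ := hy0 ▸ Cself y0
      have hA := hdom' n hn x0 hxmem y0 hymem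
      refine ⟨x0, hxmem, y0, hymem, ReflTransGen.single hA, fun hyx => ?_⟩
      have heq : L'.get ⟨n, Nat.lt_of_succ_lt hn⟩ = L'.get ⟨n + 1, hn⟩ := by
        rw [hx0, hy0]; exact Ceq (ReflTransGen.single hA) hyx
      have := nodup'.get_inj_iff.mp heq
      simp only [Fin.mk.injEq] at this
      omega
    have chain : ∀ (d n : ℕ) (hn : n + d + 1 < L'.length),
        lt (L'.get ⟨n, by omega⟩) (L'.get ⟨n + d + 1, hn⟩) := by
      intro d
      induction d with
      | zero => intro n hn; exact consec n hn
      | succ d ih =>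
        intro n hn
        have h1 : n + d + 1 < L'.length := by omega
        have h2 : (n + d + 1) + 1 < L'.length := by omega
        obtain ⟨c, hc⟩ := (memL' _).mp (List.get_mem L' ⟨(n + d + 1), h1⟩)
        have step := consec (n + d + 1) h2
        have base := ih n h1
        rw [hc] at step base
        exact ltTransC c base step
    have pairwise' : L'.Pairwise lt := by
      rw [List.pairwise_iff_get]
      intro i j hij
      have hij' : (i : ℕ) < (j : ℕ) := hij
      have hj : (j : ℕ) = (i : ℕ) + ((j : ℕ) - (i : ℕ) - 1) + 1 := by omega
      have hh : (i : ℕ) + ((j : ℕ) - (i : ℕ) - 1) + 1 < L'.length := by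
        rw [← hj]; exact j.isLt
      have := chain ((j : ℕ) - (i : ℕ) - 1) (i : ℕ) hh
      have e1 : (⟨(i : ℕ), by omega⟩ : Fin L'.length) = i := by
        apply Fin.ext; rfl
      have e2 : (⟨(i : ℕ) + ((j : ℕ) - (i : ℕ) - 1) + 1, hh⟩ : Fin L'.length) = j := by
        apply Fin.ext; exact hj.symm
      rwa [e1, e2] at this
    refine listEq lt L' LL pairwise' pairwiseLtL ?_ ?_ ?_
    · intro S hS
      obtain ⟨c, rfl⟩ := (memL' S).mp hS
      exact ltIrrC c
    · intro S hS T hT h1 h2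
      obtain ⟨c, rfl⟩ := (memL' S).mp hS
      obtain ⟨d, rfl⟩ := (memL' T).mp hT
      exact ltAsymC c d h1 h2
    · intro S
      rw [memL' S, memL S]
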